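/- (Global fluctuation bound for fast Fřlner sequences.) Let G be a locally compact second countable topological group with left Haar measure m, let B be a Banach space with a modulus of uniform convexity u, and let π : G → L(B,B) be a group homomorphism into bounded linear operators with ‖π(g)‖ ≤ 1 such that g ↦ π(g)x is strongly measurable for every x; set A_n x := (1/m(F_n)) ∫_{F_n} π(g⁻¹)x dm(g). Fix ε > 0, x ∈ B with 0 < ‖x‖ ≤ 1, η with 0 < η < u(ε)/2, and λ ∈ ℕ, λ ≥ 1. Suppose (F_n) is a (λ, η/(3‖x‖))-fast Fřlner sequence of compact subsets of positive finite Haar measure. Then every finite sequence of indices n_1 < n_2 < ⋯ < n_{k+1} with ‖A_{n_i} x − A_{n_{i+1}} x‖ ≥ ε for all 1 ≤ i ≤ k satisfies k ≤ λ·⌊2‖x‖/(u(ε) − 2η)⌋ + λ. -/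

import Mathlib

open MeasureTheory Filter Pointwise

set_option maxHeartbeats 2000000 in
/-- Global fluctuation bound for `(λ, η/(3‖x‖))`-fast Følner sequences: any chain of `k`
many `ε`-fluctuations of the ergodic averages satisfies
`k ≤ λ·⌊2‖x‖/(u(ε) − 2η)⌋ + λ`. -/
theorem stmt_18 {G : Type*} [Group G] [TopologicalSpace G] [IsTopologicalGroup G]
    [LocallyCompactSpace G] [SecondCountableTopology G]
    [MeasurableSpace G] [BorelSpace G]
    (μ : Measure G) [μ.IsHaarMeasure]
    {B : Type*} [NormedAddCommGroup B] [NormedSpace ℝ B] [CompleteSpace B]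
    (u : ℝ → ℝ) (hupos : ∀ ε : ℝ, 0 < ε → 0 < u ε)
    (humono : ∀ a b : ℝ, 0 < a → a ≤ b → u a ≤ u b)
    (huconv : ∀ ε : ℝ, 0 < ε → ∀ x y : B, ‖x‖ ≤ ‖y‖ → ‖y‖ ≤ 1 → ε ≤ ‖x - y‖ →
      ‖(1 / 2 : ℝ) • (x + y)‖ < ‖y‖ - u ε)
    (π : G →* (B →L[ℝ] B)) (hπ : ∀ g : G, ‖π g‖ ≤ 1)
    (hmeas : ∀ x : B, StronglyMeasurable fun g => π g x)
    (ε : ℝ) (hε : 0 < ε) (x : B) (hx0 : 0 < ‖x‖) (hx1 : ‖x‖ ≤ 1)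
    (η : ℝ) (hη0 : 0 < η) (hη : η < u ε / 2)
    (lam : ℕ) (hlam : 1 ≤ lam)
    (F : ℕ → Set G) (hFcpt : ∀ n, IsCompact (F n))
    (hFpos : ∀ n, 0 < μ (F n)) (hFfin : ∀ n, μ (F n) < ⊤)
    (hfast : ∀ k m : ℕ, k + lam ≤ m →
      ∃ F' ⊆ F k, MeasurableSet F' ∧
        μ (F k \ F') < ENNReal.ofReal (η / (3 * ‖x‖)) * μ (F k) ∧
        ∀ g ∈ F', μ (symmDiff (F m) (g • F m)) < ENNReal.ofReal (η / (3 * ‖x‖)) * μ (F m)) :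
    ∀ (k : ℕ) (idx : ℕ → ℕ),
      (∀ i < k, idx i < idx (i + 1) ∧
        ε ≤ ‖((μ (F (idx i))).toReal⁻¹ • ∫ g in F (idx i), π g⁻¹ x ∂μ) -
            ((μ (F (idx (i + 1)))).toReal⁻¹ • ∫ g in F (idx (i + 1)), π g⁻¹ x ∂μ)‖) →
      k ≤ lam * ⌊2 * ‖x‖ / (u ε - 2 * η)⌋₊ + lam := by
  classical
  intro k idx hidx
  by_contra hcon
  push_neg at hcon
  set δ : ℝ := u ε - 2 * η with hδdef
  have hδpos : 0 < δ := by rw [hδdef]; linarith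
  set N : ℕ := ⌊2 * ‖x‖ / δ⌋₊ with hNdef
  -- basic facts
  have hνpos : ∀ n, 0 < (μ (F n)).toReal := fun n =>
    ENNReal.toReal_pos (hFpos n).ne' (hFfin n).ne
  have hcpos : (0:ℝ) < η / (3 * ‖x‖) := by positivity
  have hsm : ∀ y : B, StronglyMeasurable fun g : G => π g⁻¹ y := fun y =>
    (hmeas y).comp_measurable measurable_inv
  have hbd : ∀ (y : B) (g : G), ‖π g⁻¹ y‖ ≤ ‖y‖ := by
    intro y g
    calc ‖π g⁻¹ y‖ ≤ ‖π g⁻¹‖ * ‖y‖ := (π g⁻¹).le_opNorm y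
    _ ≤ 1 * ‖y‖ := mul_le_mul_of_nonneg_right (hπ g⁻¹) (norm_nonneg y)
    _ = ‖y‖ := one_mul _
  have hfinS : ∀ (S : Set G), μ S < ⊤ → IsFiniteMeasure (μ.restrict S) := fun S hS =>
    ⟨by rw [Measure.restrict_apply_univ]; exact hS⟩
  have hFri : ∀ n, IsFiniteMeasure (μ.restrict (F n)) := fun n => hfinS _ (hFfin n)
  have hint : ∀ (m' : Measure G), IsFiniteMeasure m' → ∀ y : B,
      Integrable (fun g => π g⁻¹ y) m' := by
    intro m' hm' y
    haveI := hm'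
    exact (integrable_const ‖y‖).mono' (hsm y).aestronglyMeasurable
      (Eventually.of_forall (hbd y))
  have hnormint : ∀ (m' : Measure G), IsFiniteMeasure m' → ∀ (φ : G → B) (C : ℝ), 0 ≤ C →
      AEStronglyMeasurable φ m' → (∀ᵐ g ∂m', ‖φ g‖ ≤ C) →
      ‖∫ g, φ g ∂m'‖ ≤ C * (m' Set.univ).toReal := by
    intro m' hm' φ C hC hφ hb
    haveI := hm'
    have hφi : Integrable φ m' := (integrable_const C).mono' hφ hb
    calc ‖∫ g, φ g ∂m'‖ ≤ ∫ g, ‖φ g‖ ∂m' := norm_integral_le_integral_norm φ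
    _ ≤ ∫ _g, C ∂m' := integral_mono_ae hφi.norm (integrable_const C) hb
    _ = (m' Set.univ).toReal • C := integral_const C
    _ = C * (m' Set.univ).toReal := by rw [smul_eq_mul, mul_comm]
  -- the averaging operators
  set T : ℕ → B → B := fun n y => (μ (F n)).toReal⁻¹ • ∫ g in F n, π g⁻¹ y ∂μ with hT
  have hidx' : ∀ i < k, idx i < idx (i + 1) ∧ ε ≤ ‖T (idx i) x - T (idx (i + 1)) x‖ := by
    simp only [hT]; exact hidx
  have hTle : ∀ (n : ℕ) (y : B), ‖T n y‖ ≤ ‖y‖ := by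
    intro n y
    have h1 : ‖∫ g in F n, π g⁻¹ y ∂μ‖ ≤ ‖y‖ * (μ (F n)).toReal := by
      have := hnormint (μ.restrict (F n)) (hFri n) (fun g => π g⁻¹ y) ‖y‖ (norm_nonneg y)
        (hsm y).aestronglyMeasurable (Eventually.of_forall (hbd y))
      rwa [Measure.restrict_apply_univ] at this
    simp only [hT]
    rw [norm_smul, norm_inv, Real.norm_eq_abs, abs_of_pos (hνpos n)]
    calc (μ (F n)).toReal⁻¹ * ‖∫ g in F n, π g⁻¹ y ∂μ‖
        ≤ (μ (F n)).toReal⁻¹ * (‖y‖ * (μ (F n)).toReal) := by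
          exact mul_le_mul_of_nonneg_left h1 (by positivity)
    _ = ‖y‖ := by field_simp [(hνpos n).ne']
  -- measure of translates
  have hμsmul : ∀ (g : G) (W : Set G), μ (g • W) = μ W := fun g W => MeasureTheory.measure_smul (μ := μ) g W
  -- integral over a translate
  have htrans : ∀ (g : G) (S : Set G) (y : B),
      (∫ h in S, π (g*h)⁻¹ y ∂μ) = ∫ h in g • S, π h⁻¹ y ∂μ := by
    intro g S y
    have e := MeasurableEquiv.mulLeft g
    have hres : μ.restrict (g • S) =
        Measure.map (⇑(MeasurableEquiv.mulLeft g)) (μ.restrict S) := by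
      ext A hA
      rw [Measure.restrict_apply hA, MeasurableEquiv.map_apply,
        Measure.restrict_apply (hA.preimage (MeasurableEquiv.mulLeft g).measurable)]
      have h1 : (⇑(MeasurableEquiv.mulLeft g)) ⁻¹' A = g⁻¹ • A := by
        rw [MeasurableEquiv.coe_mulLeft]
        simpa [smul_eq_mul] using Set.preimage_smul g A
      rw [h1, ← hμsmul g (g⁻¹ • A ∩ S), Set.smul_set_inter, smul_inv_smul]
    rw [hres, integral_map_equiv]
    simp only [MeasurableEquiv.coe_mulLeft]
  -- integral difference bounded by symmetric difference
  have hdiff : ∀ (S T' : Set G) (y : B), μ S < ⊤ → μ T' < ⊤ →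
      ‖(∫ g in S, π g⁻¹ y ∂μ) - ∫ g in T', π g⁻¹ y ∂μ‖
        ≤ 2 * ‖y‖ * (μ (symmDiff S T')).toReal := by
    intro S T' y hS hT'
    have hΔfin : μ (symmDiff S T') < ⊤ := by
      refine lt_of_le_of_lt (measure_mono ?_) (lt_of_le_of_lt (measure_union_le S T')
        (by rw [ENNReal.add_lt_top]; exact ⟨hS, hT'⟩))
      exact symmDiff_le_sup
    set ρ : Measure G := μ.restrict (S ∩ T') with hρ
    haveI : IsFiniteMeasure ρ := hfinS _ (lt_of_le_of_lt (measure_mono Set.inter_subset_left) hS)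
    haveI : IsFiniteMeasure (μ.restrict S) := hfinS _ hS
    haveI : IsFiniteMeasure (μ.restrict T') := hfinS _ hT'
    have hρS : ρ ≤ μ.restrict S := Measure.restrict_mono Set.inter_subset_left le_rfl
    have hρT : ρ ≤ μ.restrict T' := Measure.restrict_mono Set.inter_subset_right le_rfl
    have key : ∀ (W : Set G), μ W < ⊤ → ρ ≤ μ.restrict W → W ⊆ (S ∩ T') ∪ symmDiff S T' →
        ∃ σ : Measure G, IsFiniteMeasure σ ∧ σ + ρ = μ.restrict W ∧
          (σ Set.univ).toReal ≤ (μ (symmDiff S T')).toReal := by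
      intro W hW hρW hWsub
      haveI := hfinS W hW
      refine ⟨μ.restrict W - ρ, isFiniteMeasure_of_le _ Measure.sub_le,
        Measure.sub_add_cancel_of_le hρW, ?_⟩
      have h1 : (μ.restrict W - ρ) Set.univ = μ W - μ (S ∩ T') := by
        rw [Measure.sub_apply MeasurableSet.univ hρW, Measure.restrict_apply_univ,
          hρ, Measure.restrict_apply_univ]
      rw [h1]
      have h2 : μ W - μ (S ∩ T') ≤ μ (symmDiff S T') := by
        rw [tsub_le_iff_right]
        calc μ W ≤ μ ((S ∩ T') ∪ symmDiff S T') := measure_mono hWsub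
        _ ≤ μ (S ∩ T') + μ (symmDiff S T') := measure_union_le _ _
        _ = μ (symmDiff S T') + μ (S ∩ T') := add_comm _ _
      exact (ENNReal.toReal_le_toReal (ne_of_lt (lt_of_le_of_lt tsub_le_self hW))
        hΔfin.ne).mpr h2
    obtain ⟨σ₁, hσ₁fin, hσ₁, hσ₁le⟩ := key S hS hρS (by
      intro a ha
      by_cases h : a ∈ T'
      · exact Or.inl ⟨ha, h⟩
      · exact Or.inr (Or.inl ⟨ha, h⟩ : a ∈ symmDiff S T'))
    obtain ⟨σ₂, hσ₂fin, hσ₂, hσ₂le⟩ := key T' hT' hρT (by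
      intro a ha
      by_cases h : a ∈ S
      · exact Or.inl ⟨h, ha⟩
      · exact Or.inr (Or.inr ⟨ha, h⟩ : a ∈ symmDiff S T'))
    haveI := hσ₁fin; haveI := hσ₂fin
    have e1 : (∫ g in S, π g⁻¹ y ∂μ) = (∫ g, π g⁻¹ y ∂σ₁) + ∫ g, π g⁻¹ y ∂ρ := by
      rw [← integral_add_measure (hint σ₁ hσ₁fin y) (hint ρ inferInstance y), hσ₁]
    have e2 : (∫ g in T', π g⁻¹ y ∂μ) = (∫ g, π g⁻¹ y ∂σ₂) + ∫ g, π g⁻¹ y ∂ρ := by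
      rw [← integral_add_measure (hint σ₂ hσ₂fin y) (hint ρ inferInstance y), hσ₂]
    rw [e1, e2]
    have hb1 := hnormint σ₁ hσ₁fin (fun g => π g⁻¹ y) ‖y‖ (norm_nonneg y)
      (hsm y).aestronglyMeasurable (Eventually.of_forall (hbd y))
    have hb2 := hnormint σ₂ hσ₂fin (fun g => π g⁻¹ y) ‖y‖ (norm_nonneg y)
      (hsm y).aestronglyMeasurable (Eventually.of_forall (hbd y))
    have hyn : (0:ℝ) ≤ ‖y‖ := norm_nonneg y
    calc ‖(∫ g, π g⁻¹ y ∂σ₁) + (∫ g, π g⁻¹ y ∂ρ) - ((∫ g, π g⁻¹ y ∂σ₂) + ∫ g, π g⁻¹ y ∂ρ)‖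
        = ‖(∫ g, π g⁻¹ y ∂σ₁) - (∫ g, π g⁻¹ y ∂σ₂)‖ := by rw [add_sub_add_right_eq_sub]
    _ ≤ ‖∫ g, π g⁻¹ y ∂σ₁‖ + ‖∫ g, π g⁻¹ y ∂σ₂‖ := norm_sub_le _ _
    _ ≤ ‖y‖ * (σ₁ Set.univ).toReal + ‖y‖ * (σ₂ Set.univ).toReal := add_le_add hb1 hb2
    _ ≤ ‖y‖ * (μ (symmDiff S T')).toReal + ‖y‖ * (μ (symmDiff S T')).toReal := by
        exact add_le_add (mul_le_mul_of_nonneg_left hσ₁le hyn)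
          (mul_le_mul_of_nonneg_left hσ₂le hyn)
    _ = 2 * ‖y‖ * (μ (symmDiff S T')).toReal := by ring
  have hππ : ∀ g h : G, π h⁻¹ (π g⁻¹ x) = π (g*h)⁻¹ x := by
    intro g h
    rw [mul_inv_rev, map_mul, ContinuousLinearMap.mul_apply]
  -- single-translate estimate
  have hTpt : ∀ (p : ℕ) (g : G),
      μ (symmDiff (F p) (g • F p)) < ENNReal.ofReal (η / (3 * ‖x‖)) * μ (F p) →
      ‖T p (π g⁻¹ x) - T p x‖ ≤ 2*η/3 := by
    intro p g hg
    have hsmulfin : μ (g • F p) < ⊤ := by rw [hμsmul]; exact hFfin p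
    have h1 : T p (π g⁻¹ x) = (μ (F p)).toReal⁻¹ • ∫ h in g • F p, π h⁻¹ x ∂μ := by
      simp only [hT, hππ, htrans g (F p) x]
    have h2 : ‖T p (π g⁻¹ x) - T p x‖
        = (μ (F p)).toReal⁻¹ * ‖(∫ h in g • F p, π h⁻¹ x ∂μ) - ∫ h in F p, π h⁻¹ x ∂μ‖ := by
      rw [h1]
      simp only [hT]
      rw [← smul_sub, norm_smul, norm_inv, Real.norm_eq_abs, abs_of_pos (hνpos p)]
    have h3 : (μ (symmDiff (g • F p) (F p))).toReal ≤ (η / (3 * ‖x‖)) * (μ (F p)).toReal := by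
      rw [symmDiff_comm]
      have hfin2 : ENNReal.ofReal (η / (3 * ‖x‖)) * μ (F p) ≠ ⊤ :=
        ENNReal.mul_ne_top ENNReal.ofReal_ne_top (hFfin p).ne
      have := (ENNReal.toReal_le_toReal (lt_of_lt_of_le hg le_top).ne hfin2).mpr
        hg.le
      rwa [ENNReal.toReal_mul, ENNReal.toReal_ofReal hcpos.le] at this
    rw [h2]
    calc (μ (F p)).toReal⁻¹ * ‖(∫ h in g • F p, π h⁻¹ x ∂μ) - ∫ h in F p, π h⁻¹ x ∂μ‖
        ≤ (μ (F p)).toReal⁻¹ * (2 * ‖x‖ * ((η / (3 * ‖x‖)) * (μ (F p)).toReal)) := by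
          refine mul_le_mul_of_nonneg_left ?_ (by positivity)
          refine le_trans (hdiff _ _ x hsmulfin (hFfin p)) ?_
          exact mul_le_mul_of_nonneg_left h3 (by positivity)
    _ = 2*η/3 := by field_simp [(hνpos p).ne', hx0.ne']
  -- strong measurability of g ↦ T p (π g⁻¹ x)
  have hsmT : ∀ p : ℕ, StronglyMeasurable (fun g : G => T p (π g⁻¹ x)) := by
    intro p
    haveI := hFri p
    have hw : StronglyMeasurable (fun pr : G × G => π (pr.1 * pr.2)⁻¹ x) :=
      (hmeas x).comp_measurable ((measurable_fst.mul measurable_snd).inv)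
    have h1 : StronglyMeasurable (fun g : G => ∫ h in F p, π (g * h)⁻¹ x ∂μ) :=
      hw.integral_prod_right'
    have h2 : (fun g : G => T p (π g⁻¹ x))
        = fun g : G => (μ (F p)).toReal⁻¹ • ∫ h in F p, π (g * h)⁻¹ x ∂μ := by
      funext g
      simp only [hT, hππ]
    rw [h2]
    exact h1.const_smul _
  -- Fubini: T p (T q x) is the average over F q of T p (π g⁻¹ x)
  have hTT : ∀ p q : ℕ, T p (T q x) = (μ (F q)).toReal⁻¹ • ∫ g in F q, T p (π g⁻¹ x) ∂μ := by
    intro p q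
    haveI := hFri p; haveI := hFri q
    have h1 : ∀ h : G, π h⁻¹ (T q x) = (μ (F q)).toReal⁻¹ • ∫ g in F q, π (g*h)⁻¹ x ∂μ := by
      intro h
      simp only [hT, _root_.map_smul]
      congr 1
      rw [← ContinuousLinearMap.integral_comp_comm (π h⁻¹) (hint _ (hFri q) x)]
      simp only [hππ]
    have hswap : (∫ h in F p, ∫ g in F q, π (g*h)⁻¹ x ∂μ ∂μ)
        = ∫ g in F q, ∫ h in F p, π (g*h)⁻¹ x ∂μ ∂μ := by
      apply integral_integral_swap
      have hsm2 : StronglyMeasurable (fun pr : G × G => π (pr.2 * pr.1)⁻¹ x) :=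
        (hmeas x).comp_measurable ((measurable_snd.mul measurable_fst).inv)
      exact (integrable_const ‖x‖).mono' hsm2.aestronglyMeasurable
        (Eventually.of_forall (fun pr => hbd x _))
    calc T p (T q x)
        = (μ (F p)).toReal⁻¹ • ∫ h in F p, π h⁻¹ (T q x) ∂μ := by simp only [hT]
    _ = (μ (F p)).toReal⁻¹ • ∫ h in F p,
          ((μ (F q)).toReal⁻¹ • ∫ g in F q, π (g*h)⁻¹ x ∂μ) ∂μ := by
        congr 1; exact integral_congr_ae (Eventually.of_forall (fun h => h1 h))
    _ = (μ (F p)).toReal⁻¹ • ((μ (F q)).toReal⁻¹ •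
          ∫ h in F p, (∫ g in F q, π (g*h)⁻¹ x ∂μ) ∂μ) := by rw [integral_smul]
    _ = (μ (F p)).toReal⁻¹ • ((μ (F q)).toReal⁻¹ •
          ∫ g in F q, (∫ h in F p, π (g*h)⁻¹ x ∂μ) ∂μ) := by rw [hswap]
    _ = (μ (F q)).toReal⁻¹ • ∫ g in F q, ((μ (F p)).toReal⁻¹ •
          ∫ h in F p, π (g*h)⁻¹ x ∂μ) ∂μ := by
        rw [integral_smul, smul_comm]
    _ = (μ (F q)).toReal⁻¹ • ∫ g in F q, T p (π g⁻¹ x) ∂μ := by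
        congr 1
        refine integral_congr_ae (Eventually.of_forall (fun g => ?_))
        simp only [hT, hππ]
  -- linearity of T on midpoints
  have hTmid : ∀ n (y z : B), T n ((1/2 : ℝ) • (y + z)) = (1/2 : ℝ) • (T n y + T n z) := by
    intro n y z
    haveI := hFri n
    simp only [hT]
    have h1 : (fun g : G => π g⁻¹ ((1/2 : ℝ) • (y+z)))
        = fun g : G => (1/2 : ℝ) • (π g⁻¹ y + π g⁻¹ z) := by
      funext g; rw [_root_.map_smul, map_add]
    rw [h1, integral_smul, integral_add (hint _ (hFri n) y) (hint _ (hFri n) z),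
      smul_comm, smul_add]
  -- asymptotic invariance
  have hinv : ∀ q p : ℕ, q + lam ≤ p → ‖T p (T q x) - T p x‖ ≤ 2*η := by
    intro q p hqp
    obtain ⟨F', hF'sub, hF'meas, hbad, hgood⟩ := hfast q p hqp
    haveI := hFri q
    have hIsm : StronglyMeasurable (fun g : G => T p (π g⁻¹ x) - T p x) :=
      (hsmT p).sub stronglyMeasurable_const
    have hIbd : ∀ g : G, ‖T p (π g⁻¹ x) - T p x‖ ≤ 2 * ‖x‖ := by
      intro g
      calc ‖T p (π g⁻¹ x) - T p x‖ ≤ ‖T p (π g⁻¹ x)‖ + ‖T p x‖ := norm_sub_le _ _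
      _ ≤ ‖π g⁻¹ x‖ + ‖x‖ := add_le_add (hTle p _) (hTle p x)
      _ ≤ ‖x‖ + ‖x‖ := add_le_add_left (hbd x g) _
      _ = 2 * ‖x‖ := by ring
    have hIint : ∀ (m' : Measure G), IsFiniteMeasure m' →
        Integrable (fun g : G => T p (π g⁻¹ x) - T p x) m' := by
      intro m' hm'; haveI := hm'
      exact (integrable_const (2*‖x‖)).mono' hIsm.aestronglyMeasurable
        (Eventually.of_forall hIbd)
    have hTpint : Integrable (fun g : G => T p (π g⁻¹ x)) (μ.restrict (F q)) :=
      (integrable_const ‖x‖).mono' (hsmT p).aestronglyMeasurable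
        (Eventually.of_forall (fun g => le_trans (hTle p _) (hbd x g)))
    have e0 : T p (T q x) - T p x
        = (μ (F q)).toReal⁻¹ • ∫ g in F q, (T p (π g⁻¹ x) - T p x) ∂μ := by
      rw [integral_sub hTpint (integrable_const _), integral_const,
        measureReal_restrict_apply_univ, Measure.real, smul_sub, hTT p q]
      congr 1
      rw [smul_smul, inv_mul_cancel₀ (hνpos q).ne', one_smul]
    have hsplit : μ.restrict (F q) = μ.restrict F' + μ.restrict (F q \ F') := by
      have h1 : (μ.restrict (F q)).restrict F' + (μ.restrict (F q)).restrict F'ᶜ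
          = μ.restrict (F q) := Measure.restrict_add_restrict_compl hF'meas
      rw [Measure.restrict_restrict hF'meas, Measure.restrict_restrict hF'meas.compl,
        Set.inter_eq_self_of_subset_left hF'sub] at h1
      rw [← h1]
      congr 1
      rw [Set.diff_eq, Set.inter_comm]
    haveI hfF' : IsFiniteMeasure (μ.restrict F') :=
      hfinS _ (lt_of_le_of_lt (measure_mono hF'sub) (hFfin q))
    haveI hfFd : IsFiniteMeasure (μ.restrict (F q \ F')) :=
      hfinS _ (lt_of_le_of_lt (measure_mono Set.diff_subset) (hFfin q))
    have esplit : (∫ g in F q, (T p (π g⁻¹ x) - T p x) ∂μ)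
        = (∫ g, (T p (π g⁻¹ x) - T p x) ∂(μ.restrict F'))
          + ∫ g, (T p (π g⁻¹ x) - T p x) ∂(μ.restrict (F q \ F')) := by
      rw [show (∫ g in F q, (T p (π g⁻¹ x) - T p x) ∂μ)
          = ∫ g, (T p (π g⁻¹ x) - T p x) ∂(μ.restrict (F q)) from rfl, hsplit]
      exact integral_add_measure (hIint _ hfF') (hIint _ hfFd)
    have hgb : ‖∫ g, (T p (π g⁻¹ x) - T p x) ∂(μ.restrict F')‖
        ≤ (2*η/3) * (μ (F q)).toReal := by
      have h1 := hnormint (μ.restrict F') hfF' _ (2*η/3) (by positivity)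
        hIsm.aestronglyMeasurable
        ((ae_restrict_mem hF'meas).mono (fun g hg => hTpt p g (hgood g hg)))
      rw [Measure.restrict_apply_univ] at h1
      refine le_trans h1 (mul_le_mul_of_nonneg_left ?_ (by positivity))
      exact (ENNReal.toReal_le_toReal (lt_of_le_of_lt (measure_mono hF'sub) (hFfin q)).ne
        (hFfin q).ne).mpr (measure_mono hF'sub)
    have hdm : (μ (F q \ F')).toReal ≤ (η / (3 * ‖x‖)) * (μ (F q)).toReal := by
      have hfin2 : ENNReal.ofReal (η / (3 * ‖x‖)) * μ (F q) ≠ ⊤ :=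
        ENNReal.mul_ne_top ENNReal.ofReal_ne_top (hFfin q).ne
      have := (ENNReal.toReal_le_toReal (lt_of_lt_of_le hbad le_top).ne hfin2).mpr hbad.le
      rwa [ENNReal.toReal_mul, ENNReal.toReal_ofReal hcpos.le] at this
    have hbb : ‖∫ g, (T p (π g⁻¹ x) - T p x) ∂(μ.restrict (F q \ F'))‖
        ≤ (2*η/3) * (μ (F q)).toReal := by
      have h1 := hnormint (μ.restrict (F q \ F')) hfFd _ (2*‖x‖) (by positivity)
        hIsm.aestronglyMeasurable (Eventually.of_forall hIbd)
      rw [Measure.restrict_apply_univ] at h1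
      refine le_trans h1 (le_trans (mul_le_mul_of_nonneg_left hdm (by positivity)) ?_)
      rw [show (2*‖x‖) * ((η / (3 * ‖x‖)) * (μ (F q)).toReal)
          = (2*η/3) * (μ (F q)).toReal * (‖x‖ / ‖x‖) by ring, div_self hx0.ne', mul_one]
    rw [e0, esplit, norm_smul, norm_inv, Real.norm_eq_abs, abs_of_pos (hνpos q)]
    calc (μ (F q)).toReal⁻¹ * ‖(∫ g, (T p (π g⁻¹ x) - T p x) ∂(μ.restrict F'))
          + ∫ g, (T p (π g⁻¹ x) - T p x) ∂(μ.restrict (F q \ F'))‖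
        ≤ (μ (F q)).toReal⁻¹ * ((2*η/3) * (μ (F q)).toReal + (2*η/3) * (μ (F q)).toReal) := by
          refine mul_le_mul_of_nonneg_left (le_trans (norm_add_le _ _) (add_le_add hgb hbb))
            (by positivity)
    _ = 4*η/3 := by field_simp [(hνpos q).ne']; ring
    _ ≤ 2*η := by linarith
  -- monotonicity of idx
  have hmono : ∀ d i : ℕ, i + d ≤ k → idx i + d ≤ idx (i + d) := by
    intro d
    induction d with
    | zero => intro i _; simp
    | succ d ih =>
      intro i h
      have h1 := ih i (by omega)
      have h2 := (hidx' (i + d) (by omega)).1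
      show idx i + (d+1) ≤ idx (i + d + 1)
      omega
  have hmono' : ∀ a b : ℕ, a ≤ b → b ≤ k → idx a + (b - a) ≤ idx b := by
    intro a b hab hbk
    have := hmono (b - a) a (by omega)
    rwa [Nat.add_sub_cancel' hab] at this
  -- the drop lemma
  have hdrop : ∀ i j : ℕ, i < k → j ≤ k → idx (i+1) + lam ≤ idx j →
      ‖T (idx j) x‖ < max ‖T (idx i) x‖ ‖T (idx (i+1)) x‖ - δ := by
    intro i j hik hjk hsep
    have hflt := (hidx' i hik).2
    have hsep' : idx i + lam ≤ idx j := by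
      have := (hidx' i hik).1; omega
    have hi1 := hinv (idx i) (idx j) hsep'
    have hi2 := hinv (idx (i+1)) (idx j) hsep
    have hmax : ‖(1/2 : ℝ) • (T (idx i) x + T (idx (i+1)) x)‖
        < max ‖T (idx i) x‖ ‖T (idx (i+1)) x‖ - u ε := by
      rcases le_total ‖T (idx i) x‖ ‖T (idx (i+1)) x‖ with hle | hle
      · have h := huconv ε hε (T (idx i) x) (T (idx (i+1)) x) hle
          (le_trans (hTle _ x) hx1) hflt
        have := le_max_right ‖T (idx i) x‖ ‖T (idx (i+1)) x‖
        linarith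
      · have h := huconv ε hε (T (idx (i+1)) x) (T (idx i) x) hle
          (le_trans (hTle _ x) hx1) (by rwa [norm_sub_rev])
        rw [add_comm (T (idx (i+1)) x) (T (idx i) x)] at h
        have := le_max_left ‖T (idx i) x‖ ‖T (idx (i+1)) x‖
        linarith
    have hTm := hTmid (idx j) (T (idx i) x) (T (idx (i+1)) x)
    have hclose : ‖T (idx j) ((1/2 : ℝ) • (T (idx i) x + T (idx (i+1)) x)) - T (idx j) x‖
        ≤ 2*η := by
      rw [hTm]
      have hid : (1/2 : ℝ) • (T (idx j) (T (idx i) x) + T (idx j) (T (idx (i+1)) x))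
            - T (idx j) x
          = (1/2 : ℝ) • ((T (idx j) (T (idx i) x) - T (idx j) x)
            + (T (idx j) (T (idx (i+1)) x) - T (idx j) x)) := by module
      rw [hid, norm_smul, Real.norm_eq_abs, abs_of_pos (by norm_num : (0:ℝ) < 1/2)]
      calc (1/2 : ℝ) * ‖(T (idx j) (T (idx i) x) - T (idx j) x)
            + (T (idx j) (T (idx (i+1)) x) - T (idx j) x)‖
          ≤ (1/2 : ℝ) * (2*η + 2*η) := by
            refine mul_le_mul_of_nonneg_left (le_trans (norm_add_le _ _)
              (add_le_add hi1 hi2)) (by norm_num)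
      _ = 2*η := by ring
    have hle1 : ‖T (idx j) x‖
        ≤ ‖T (idx j) ((1/2 : ℝ) • (T (idx i) x + T (idx (i+1)) x))‖ + 2*η := by
      calc ‖T (idx j) x‖
          = ‖T (idx j) ((1/2 : ℝ) • (T (idx i) x + T (idx (i+1)) x))
            - (T (idx j) ((1/2 : ℝ) • (T (idx i) x + T (idx (i+1)) x)) - T (idx j) x)‖ := by
            rw [sub_sub_cancel]
      _ ≤ ‖T (idx j) ((1/2 : ℝ) • (T (idx i) x + T (idx (i+1)) x))‖
            + ‖T (idx j) ((1/2 : ℝ) • (T (idx i) x + T (idx (i+1)) x)) - T (idx j) x‖ :=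
            norm_sub_le _ _
      _ ≤ _ + 2*η := by linarith
    have hle2 := hTle (idx j) ((1/2 : ℝ) • (T (idx i) x + T (idx (i+1)) x))
    rw [hδdef]
    linarith [hTle (idx j) ((1/2 : ℝ) • (T (idx i) x + T (idx (i+1)) x))]
  -- chain quantities
  set c : ℕ → ℝ := fun i => max ‖T (idx i) x‖ ‖T (idx (i+1)) x‖ with hc
  have hcub : ∀ i : ℕ, c i ≤ ‖x‖ := fun i => max_le (hTle _ x) (hTle _ x)
  have hclb : ∀ i : ℕ, i < k → ε ≤ 2 * c i := by
    intro i h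
    have h2 := (hidx' i h).2
    have h3 := norm_sub_le (T (idx i) x) (T (idx (i+1)) x)
    have h4 : ‖T (idx i) x‖ ≤ c i := le_max_left _ _
    have h5 : ‖T (idx (i+1)) x‖ ≤ c i := le_max_right _ _
    linarith
  have hcdrop : ∀ i : ℕ, i + 2*lam + 1 ≤ k → c (i + 2*lam) < c i - δ := by
    intro i h
    have e1 := hdrop i (i + 2*lam) (by omega) (by omega) (by
      have := hmono' (i+1) (i + 2*lam) (by omega) (by omega); omega)
    have e2 := hdrop i (i + 2*lam + 1) (by omega) (by omega) (by
      have := hmono' (i+1) (i + 2*lam + 1) (by omega) (by omega); omega)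
    simp only [hc]
    exact max_lt e1 e2
  have heven : ∀ a : ℕ, 2*a ≤ N+1 → c (2*a*lam) + a * δ ≤ c 0 := by
    intro a
    induction a with
    | zero => intro _; simp
    | succ a ih =>
      intro h
      have h1 := ih (by omega)
      have hstep : c (2*a*lam + 2*lam) < c (2*a*lam) - δ := by
        apply hcdrop
        have h2 : (2*a+2) * lam ≤ (N+1) * lam := mul_le_mul_left (by omega) lam
        have h3 : (2*a+2)*lam = 2*a*lam + 2*lam := by ring
        have h4 : (N+1) * lam = lam * N + lam := by ring
        omega
      have hidxeq : 2*(a+1)*lam = 2*a*lam + 2*lam := by ring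
      rw [hidxeq]
      push_cast
      push_cast at h1
      linarith
  have hodd : ∀ a : ℕ, 2*a+1 ≤ N+1 → c ((2*a+1)*lam) + a * δ ≤ c (1*lam) := by
    intro a
    induction a with
    | zero => intro _; norm_num
    | succ a ih =>
      intro h
      have h1 := ih (by omega)
      have hstep : c ((2*a+1)*lam + 2*lam) < c ((2*a+1)*lam) - δ := by
        apply hcdrop
        have h2 : ((2*a+1)+2) * lam ≤ (N+1) * lam := mul_le_mul_left (by omega) lam
        have h3 : ((2*a+1)+2)*lam = (2*a+1)*lam + 2*lam := by ring
        have h4 : (N+1) * lam = lam * N + lam := by ring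
        omega
      have hidxeq : (2*(a+1)+1)*lam = (2*a+1)*lam + 2*lam := by ring
      rw [hidxeq]
      push_cast
      push_cast at h1
      linarith
  -- k is at least 1
  have hk1 : 0 < k := by
    have := Nat.le_add_left lam (lam * N)
    omega
  have hflt0 : ε ≤ ‖T (idx 0) x - T (idx 1) x‖ := by
    simpa using (hidx' 0 hk1).2
  have hux : u ε < ‖x‖ := by
    rcases le_total ‖T (idx 0) x‖ ‖T (idx 1) x‖ with hle | hle
    · have h := huconv ε hε (T (idx 0) x) (T (idx 1) x) hle (le_trans (hTle _ x) hx1) hflt0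
      have h0 := norm_nonneg ((1/2 : ℝ) • (T (idx 0) x + T (idx 1) x))
      have h5 := hTle (idx 1) x
      linarith
    · have h := huconv ε hε (T (idx 1) x) (T (idx 0) x) hle (le_trans (hTle _ x) hx1)
        (by rwa [norm_sub_rev])
      have h0 := norm_nonneg ((1/2 : ℝ) • (T (idx 1) x + T (idx 0) x))
      have h5 := hTle (idx 0) x
      linarith
  have hde : δ < ε := by
    rcases le_or_gt ε 1 with hle | hlt
    · have hy : ‖(ε / ‖x‖) • x‖ = ε := by
        rw [norm_smul, Real.norm_eq_abs, abs_of_pos (by positivity),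
          div_mul_cancel₀ _ hx0.ne']
      have h := huconv ε hε 0 ((ε / ‖x‖) • x) (by rw [norm_zero, hy]; exact hε.le)
        (by rw [hy]; exact hle) (by rw [zero_sub, norm_neg, hy])
      have h0 := norm_nonneg ((1/2 : ℝ) • ((0:B) + (ε / ‖x‖) • x))
      rw [hy] at h
      rw [hδdef]; linarith
    · rw [hδdef]; linarith
  -- final contradiction
  have hE := heven ((N+1)/2) (by omega)
  have hO := hodd (N/2) (by omega)
  have hlow1 : ε ≤ 2 * c (2*((N+1)/2)*lam) := by
    apply hclb
    have h2 : (2*((N+1)/2)) * lam ≤ (N+1) * lam := mul_le_mul_left (by omega) lam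
    have h4 : (N+1) * lam = lam * N + lam := by ring
    omega
  have hlow2 : ε ≤ 2 * c ((2*(N/2)+1)*lam) := by
    apply hclb
    have h2 : (2*(N/2)+1) * lam ≤ (N+1) * lam := mul_le_mul_left (by omega) lam
    have h4 : (N+1) * lam = lam * N + lam := by ring
    omega
  have hup0 : c 0 ≤ ‖x‖ := hcub 0
  have hup1 : c (1*lam) ≤ ‖x‖ := hcub _
  have hNδ : 2 * ‖x‖ < (N:ℝ) * δ + δ := by
    have h := Nat.lt_floor_add_one (2 * ‖x‖ / δ)
    rw [← hNdef] at h
    rw [div_lt_iff₀ hδpos] at h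
    have h2 : ((N:ℝ) + 1) * δ = (N:ℝ) * δ + δ := by ring
    linarith
  have hsum : ((N+1)/2 : ℕ) + (N/2 : ℕ) = N := by omega
  have hsumR : (((N+1)/2 : ℕ) : ℝ) + ((N/2 : ℕ) : ℝ) = (N : ℝ) := by
    exact_mod_cast congrArg (Nat.cast : ℕ → ℝ) hsum
  have hmul : (((N+1)/2 : ℕ) : ℝ) * δ + ((N/2 : ℕ) : ℝ) * δ = (N:ℝ) * δ := by
    rw [← add_mul, hsumR]
  have s1 : (((N+1)/2 : ℕ) : ℝ) * δ ≤ ‖x‖ - ε/2 := by linarith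
  have s2 : ((N/2 : ℕ) : ℝ) * δ ≤ ‖x‖ - ε/2 := by linarith
  have s3 : (N:ℝ) * δ ≤ 2*‖x‖ - ε := by rw [← hmul]; linarith
  linarith
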